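/- arXiv:1902.08682 — 2 statements merged into one kernel-verified Lean document; each statement's English description precedes it below -/
import Mathlib

section
/- Let φ₁, φ₂ be a basis of ℝ² with φ₁ + φ₂ = (α, 0)ᵀ, α ≠ 0, and write φ₂ = (β, γ)ᵀ with γ ≠ 0. Let (d_n) be a sequence of reals with c₁/n ≤ |d_n| ≤ c₂/n for constants 0 < c₁ ≤ c₂. Define Φ̃_{n1}(x) = sin(nx)(φ₁+φ₂) and Φ̃_{n2}(x) = d_n sin(nx) φ₂. Then a pair (u₁, u₂) ∈ L²(0,π) × H¹₀(0,π) admits a unique representation (u₁,u₂) = Σ_n (ã_{n1} Φ̃_{n1} + ã_{n2} Φ̃_{n2}) with (ã_{n1}), (ã_{n2}) ∈ ℓ², and ‖u₁‖²_{L²} + ‖u₂‖²_{H¹} ≍ Σ_{n,j} |ã_{nj}|². In particular {Φ̃_{nj}} is a Riesz basis of the asymmetric space L²(0,π) × H¹₀(0,π). -/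
lemma stmt11_key (α β γ c₁ c₂ a₁ a₂ v w D N : ℝ) (hN : 1 ≤ N)
    (hα : α ≠ 0) (hγ : γ ≠ 0) (hc₁ : 0 < c₁)
    (h1 : c₁ ≤ |D| * N) (h2 : |D| * N ≤ c₂)
    (hv : v = a₁ * α + a₂ * (D * β)) (hw : w = a₂ * (D * γ)) :
    v ^ 2 + (N * w) ^ 2 ≤ (2*α^2 + 2*c₂^2*β^2 + c₂^2*γ^2) * (a₁^2 + a₂^2) ∧
    a₁ ^ 2 + a₂ ^ 2 ≤ (2/α^2 + 2*β^2/(α^2*γ^2) + 1/(c₁^2*γ^2)) * (v ^ 2 + (N * w) ^ 2) := by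
  have hNpos : (0:ℝ) < N := lt_of_lt_of_le one_pos hN
  have hα2 : (0:ℝ) < α^2 := pow_two_pos_of_ne_zero hα
  have hγ2 : (0:ℝ) < γ^2 := pow_two_pos_of_ne_zero hγ
  have hD2 : D^2 * N^2 ≤ c₂^2 := by nlinarith [abs_nonneg D, sq_abs D, hc₁.le, hc₁.trans_le h1]
  have hD1 : c₁^2 ≤ D^2 * N^2 := by nlinarith [abs_nonneg D, sq_abs D, hc₁.le]
  have hDle : D^2 ≤ c₂^2 := by nlinarith [sq_nonneg D, sq_nonneg N, mul_nonneg (sq_nonneg D) (sub_nonneg.2 (one_le_pow_iff_of_nonneg (by positivity) two_ne_zero |>.mpr hN))]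
  constructor
  · subst hv hw
    nlinarith [sq_nonneg (a₁*α - a₂*(D*β)),
      mul_nonneg (sub_nonneg.2 hDle) (sq_nonneg (a₂*β)),
      mul_nonneg (sub_nonneg.2 hD2) (sq_nonneg (a₂*γ)),
      sq_nonneg (a₂*α), sq_nonneg (a₁*β*c₂), sq_nonneg (a₁*γ*c₂)]
  · have ha₂ : a₂^2 ≤ 1/(c₁^2*γ^2) * (N*w)^2 := by
      rw [one_div, ← div_eq_inv_mul, le_div_iff₀ (by positivity)]
      subst hw
      nlinarith [mul_nonneg (sub_nonneg.2 hD1) (sq_nonneg (a₂*γ))]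
    have hN2 : 1 ≤ N^2 := one_le_pow_iff_of_nonneg (by positivity) two_ne_zero |>.mpr hN
    have ha₁ : a₁^2 ≤ 2/α^2 * v^2 + 2*β^2/(α^2*γ^2) * (N*w)^2 := by
      have hid : a₁*α*γ = v*γ - w*β := by subst hv hw; ring
      have hid2 : (a₁*α*γ)^2 = (v*γ - w*β)^2 := by rw [hid]
      rw [show 2/α^2 * v^2 + 2*β^2/(α^2*γ^2) * (N*w)^2
          = (2*γ^2*v^2 + 2*β^2*(N*w)^2)/(α^2*γ^2) by field_simp,
        le_div_iff₀ (by positivity)]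
      nlinarith [hid2, sq_nonneg (v*γ + w*β), mul_nonneg (sub_nonneg.2 hN2) (sq_nonneg (w*β))]
    have n1 : 0 ≤ 2/α^2 * (N*w)^2 := by positivity
    have n2 : 0 ≤ 2*β^2/(α^2*γ^2) * v^2 := by positivity
    have n3 : 0 ≤ 1/(c₁^2*γ^2) * v^2 := by positivity
    have expand : (2/α^2 + 2*β^2/(α^2*γ^2) + 1/(c₁^2*γ^2)) * (v^2 + (N*w)^2)
        = (2/α^2*v^2 + 2*β^2/(α^2*γ^2)*(N*w)^2) + (1/(c₁^2*γ^2)*(N*w)^2)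
          + (2/α^2*(N*w)^2 + 2*β^2/(α^2*γ^2)*v^2 + 1/(c₁^2*γ^2)*v^2) := by ring
    rw [expand]; linarith

/-- with `φ₁ + φ₂ = (α,0)ᵀ`, `α ≠ 0`, `φ₂ = (β,γ)ᵀ`, `γ ≠ 0`, and
`c₁/n ≤ |d_n| ≤ c₂/n`, every pair `(u₁,u₂) ∈ L²(0,π) × H¹₀(0,π)` — described by its
sine coefficients `v n` (of `u₁`) and `w n` (of `u₂`) for the frequency `n+1`, with
`(v n) ∈ ℓ²` and `((n+1) w n) ∈ ℓ²` — has a unique representation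
`(u₁,u₂) = Σ_n (ã_{n1} Φ̃_{n1} + ã_{n2} Φ̃_{n2})` with `ℓ²` coefficients, where
`Φ̃_{n1} = sin(nx)(φ₁+φ₂)` and `Φ̃_{n2} = d_n sin(nx) φ₂`, i.e. coefficientwise
`v n = ã_{n1} α + ã_{n2} d_n β`, `w n = ã_{n2} d_n γ`; moreover
`‖u₁‖²_{L²} + ‖u₂‖²_{H¹} ≍ Σ |ã_{nj}|²`: `{Φ̃_{nj}}` is a Riesz basis of the
asymmetric space `L²(0,π) × H¹₀(0,π)`. -/
theorem stmt11 (α β γ : ℝ) (hα : α ≠ 0) (hγ : γ ≠ 0)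
    (φ₁ φ₂ : Fin 2 → ℝ) (hind : LinearIndependent ℝ ![φ₁, φ₂])
    (hsum : φ₁ + φ₂ = ![α, 0]) (hφ₂ : φ₂ = ![β, γ])
    (d : ℕ → ℝ) (c₁ c₂ : ℝ) (hc₁ : 0 < c₁) (hc : c₁ ≤ c₂)
    (hd : ∀ n : ℕ, c₁ / (n + 1) ≤ |d n| ∧ |d n| ≤ c₂ / (n + 1)) :
    ∃ m M : ℝ, 0 < m ∧ m ≤ M ∧
      ∀ v w : ℕ → ℝ,
        Summable (fun n => (v n)^2) → Summable (fun n : ℕ => (((n : ℝ) + 1) * w n)^2) →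
        (∃! p : (ℕ → ℝ) × (ℕ → ℝ),
          (Summable fun n => (p.1 n)^2) ∧ (Summable fun n => (p.2 n)^2) ∧
          (∀ n, v n = p.1 n * α + p.2 n * (d n * β) ∧ w n = p.2 n * (d n * γ))) ∧
        ∀ p : (ℕ → ℝ) × (ℕ → ℝ),
          (Summable fun n => (p.1 n)^2) → (Summable fun n => (p.2 n)^2) →
          (∀ n, v n = p.1 n * α + p.2 n * (d n * β) ∧ w n = p.2 n * (d n * γ)) →
          m * ((∑' n, (v n)^2) + ∑' n : ℕ, (((n : ℝ) + 1) * w n)^2) ≤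
              (∑' n, (p.1 n)^2) + (∑' n, (p.2 n)^2) ∧
            (∑' n, (p.1 n)^2) + (∑' n, (p.2 n)^2) ≤
              M * ((∑' n, (v n)^2) + ∑' n : ℕ, (((n : ℝ) + 1) * w n)^2) := by
  have hα2 : (0:ℝ) < α^2 := pow_two_pos_of_ne_zero hα
  have hγ2 : (0:ℝ) < γ^2 := pow_two_pos_of_ne_zero hγ
  have hNpos : ∀ n : ℕ, (0:ℝ) < (n:ℝ) + 1 := fun n => by positivity
  have hN1 : ∀ n : ℕ, (1:ℝ) ≤ (n:ℝ) + 1 := fun n => by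
    have : (0:ℝ) ≤ (n:ℝ) := Nat.cast_nonneg n; linarith
  have hd1 : ∀ n : ℕ, c₁ ≤ |d n| * ((n:ℝ)+1) := fun n => by
    have := (hd n).1; rw [div_le_iff₀ (hNpos n)] at this; linarith
  have hd2 : ∀ n : ℕ, |d n| * ((n:ℝ)+1) ≤ c₂ := fun n => by
    have := (hd n).2; rw [le_div_iff₀ (hNpos n)] at this; linarith
  have hdne : ∀ n : ℕ, d n ≠ 0 := fun n h => by
    have h1 := hd1 n
    rw [h, abs_zero, zero_mul] at h1
    linarith
  set K : ℝ := 2*α^2 + 2*c₂^2*β^2 + c₂^2*γ^2 with hKdef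
  set M : ℝ := 2/α^2 + 2*β^2/(α^2*γ^2) + 1/(c₁^2*γ^2) with hMdef
  have hc₂ : (0:ℝ) < c₂ := lt_of_lt_of_le hc₁ hc
  have hKpos : 0 < K := by positivity
  have hMpos : 0 < M := by positivity
  have hmM : 1/K ≤ M := by
    have h1 : 1/K ≤ 1/(2*α^2) := by
      apply one_div_le_one_div_of_le (by positivity)
      nlinarith [sq_nonneg (c₂*β), sq_nonneg (c₂*γ)]
    have h2 : 1/(2*α^2) ≤ 2/α^2 := by
      rw [div_le_div_iff₀ (by positivity) (by positivity)]; nlinarith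
    have h3 : 2/α^2 ≤ M := by
      have n2 : 0 ≤ 2*β^2/(α^2*γ^2) := by positivity
      have n3 : 0 ≤ 1/(c₁^2*γ^2) := by positivity
      rw [hMdef]; linarith
    linarith
  refine ⟨1/K, M, by positivity, hmM, ?_⟩
  intro v w hv hw
  -- the key pointwise estimates, for any representation
  have keyfact : ∀ p : (ℕ → ℝ) × (ℕ → ℝ),
      (∀ n, v n = p.1 n * α + p.2 n * (d n * β) ∧ w n = p.2 n * (d n * γ)) →
      ∀ n : ℕ,
        (v n) ^ 2 + (((n:ℝ)+1) * w n) ^ 2 ≤ K * ((p.1 n)^2 + (p.2 n)^2) ∧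
        (p.1 n)^2 + (p.2 n)^2 ≤ M * ((v n) ^ 2 + (((n:ℝ)+1) * w n) ^ 2) := by
    intro p hp n
    exact stmt11_key α β γ c₁ c₂ (p.1 n) (p.2 n) (v n) (w n) (d n) ((n:ℝ)+1)
      (hN1 n) hα hγ hc₁ (hd1 n) (hd2 n) (hp n).1 (hp n).2
  have hsumVW : Summable (fun n => (v n)^2 + (((n:ℝ)+1) * w n)^2) := hv.add hw
  have hsumM : Summable (fun n => M * ((v n)^2 + (((n:ℝ)+1) * w n)^2)) := hsumVW.mul_left M
  -- summability of components of any representation follows from keyfact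
  have sumrep : ∀ p : (ℕ → ℝ) × (ℕ → ℝ),
      (∀ n, v n = p.1 n * α + p.2 n * (d n * β) ∧ w n = p.2 n * (d n * γ)) →
      (Summable fun n => (p.1 n)^2) ∧ (Summable fun n => (p.2 n)^2) := by
    intro p hp
    constructor
    · apply hsumM.of_nonneg_of_le (fun n => sq_nonneg _)
      intro n
      have := (keyfact p hp n).2
      nlinarith [sq_nonneg (p.2 n)]
    · apply hsumM.of_nonneg_of_le (fun n => sq_nonneg _)
      intro n
      have := (keyfact p hp n).2
      nlinarith [sq_nonneg (p.1 n)]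
  constructor
  · -- existence and uniqueness
    refine ⟨⟨fun n => (v n - w n * β / γ) / α, fun n => w n / (d n * γ)⟩, ?_, ?_⟩
    · have hrel : ∀ n, v n = ((v n - w n * β / γ) / α) * α
          + (w n / (d n * γ)) * (d n * β) ∧ w n = (w n / (d n * γ)) * (d n * γ) := by
        intro n
        constructor
        · field_simp [hdne n]
          ring
        · rw [div_mul_cancel₀ _ (mul_ne_zero (hdne n) hγ)]
      obtain ⟨s1, s2⟩ := sumrep ⟨fun n => (v n - w n * β / γ) / α, fun n => w n / (d n * γ)⟩ hrel
      exact ⟨s1, s2, hrel⟩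
    · rintro q ⟨_, _, hq⟩
      have h2 : ∀ n, q.2 n = w n / (d n * γ) := fun n => by
        rw [eq_div_iff (mul_ne_zero (hdne n) hγ)]
        exact ((hq n).2).symm
      have h1 : ∀ n, q.1 n = (v n - w n * β / γ) / α := fun n => by
        rw [eq_div_iff hα]
        have hv' := (hq n).1
        rw [h2 n] at hv'
        have : w n / (d n * γ) * (d n * β) = w n * β / γ := by
          field_simp [hdne n]
        rw [this] at hv'
        linarith
      exact Prod.ext (funext h1) (funext h2)
  · -- the two-sided bound
    intro p hp1 hp2 hp
    have hsumAB : Summable (fun n => (p.1 n)^2 + (p.2 n)^2) := hp1.add hp2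
    have hsumK : Summable (fun n => K * ((p.1 n)^2 + (p.2 n)^2)) := hsumAB.mul_left K
    have tVW : (∑' n, (v n)^2) + (∑' n : ℕ, (((n:ℝ)+1) * w n)^2)
        = ∑' n, ((v n)^2 + (((n:ℝ)+1) * w n)^2) := (Summable.tsum_add hv hw).symm
    have tAB : (∑' n, (p.1 n)^2) + (∑' n, (p.2 n)^2)
        = ∑' n, ((p.1 n)^2 + (p.2 n)^2) := (Summable.tsum_add hp1 hp2).symm
    constructor
    · have hle : (∑' n, ((v n)^2 + (((n:ℝ)+1) * w n)^2))
          ≤ K * ∑' n, ((p.1 n)^2 + (p.2 n)^2) := by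
        rw [← tsum_mul_left]
        exact Summable.tsum_le_tsum (fun n => (keyfact p hp n).1) hsumVW hsumK
      rw [tVW, tAB]
      have hstep : (1/K) * (∑' n, ((v n)^2 + (((n:ℝ)+1) * w n)^2))
          ≤ (1/K) * (K * ∑' n, ((p.1 n)^2 + (p.2 n)^2)) :=
        mul_le_mul_of_nonneg_left hle (by positivity)
      have heq : (1/K) * (K * ∑' n, ((p.1 n)^2 + (p.2 n)^2))
          = ∑' n, ((p.1 n)^2 + (p.2 n)^2) := by
        field_simp
      linarith
    · rw [tVW, tAB, ← tsum_mul_left]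
      exact Summable.tsum_le_tsum (fun n => (keyfact p hp n).2) hsumAB hsumM
end

section
/- Let H be a Hilbert space and {e_k}_{k∈K} a family that splits as E₀ ∪ E₁ where E₁ is infinite and every element of E₁ lies in the closed linear span of E₀. Then the set of sequences {((f, e_k))_{k∈K} : f ∈ H} ∩ ℓ²(K) has infinite codimension in ℓ²(K), in the sense that there is an infinite linearly independent family of ℓ² sequences not attained as moment sequences. -/
/-- if a family `{e_k}` in a Hilbert space splits as `E₀ ∪ E₁` with
`E₁` infinite, each element indexed by `E₁` lying in the closed span of the `E₀`
part, and the `E₀` part a Riesz sequence, then the attained moment sequences have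
infinite codimension in `ℓ²(K)`: there is an infinite linearly independent family
of `ℓ²` sequences none of which is a moment sequence `((f, e_k))_k`. -/
theorem stmt19 {H : Type*} [NormedAddCommGroup H] [InnerProductSpace ℂ H]
    [CompleteSpace H] {K : Type*} (e : K → H) (K₀ K₁ : Set K)
    (hcover : K₀ ∪ K₁ = Set.univ) (hdisj : Disjoint K₀ K₁) (hinf : K₁.Infinite)
    (hspan : ∀ k ∈ K₁, e k ∈ closure (Submodule.span ℂ (e '' K₀) : Set H))
    (hRiesz : ∃ m M : ℝ, 0 < m ∧ ∀ a : K →₀ ℂ, ↑a.support ⊆ K₀ →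
      m * ∑ k ∈ a.support, ‖a k‖^2 ≤ ‖∑ k ∈ a.support, a k • e k‖^2 ∧
      ‖∑ k ∈ a.support, a k • e k‖^2 ≤ M * ∑ k ∈ a.support, ‖a k‖^2) :
    ∃ g : ℕ → (K → ℂ), LinearIndependent ℂ g ∧
      ∀ n, (Summable fun k => ‖g n k‖^2) ∧
        ¬ ∃ f : H, ∀ k, (inner ℂ f (e k) : ℂ) = g n k := by
  classical
  have c : ℕ ↪ K₁ := Set.Infinite.natEmbedding K₁ hinf
  have hinj : Function.Injective (fun n => ((c n : K₁) : K)) :=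
    Subtype.val_injective.comp c.injective
  refine ⟨fun n k => if ((c n : K₁) : K) = k then 1 else 0, ?_, ?_⟩
  · rw [linearIndependent_iff']
    intro s a hsum i hi
    have h := congrFun hsum ((c i : K₁) : K)
    simp only [Finset.sum_apply, Pi.smul_apply, smul_eq_mul, Pi.zero_apply,
      mul_ite, mul_one, mul_zero] at h
    have hconv : ∀ n ∈ s,
        (if ((c n : K₁) : K) = ((c i : K₁) : K) then a n else 0)
          = if i = n then a n else 0 := by
      intro n _
      by_cases hni : i = n
      · subst hni; simp
      · rw [if_neg (fun hcn => hni (hinj hcn).symm), if_neg hni]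
    rw [Finset.sum_congr rfl hconv, Finset.sum_ite_eq, if_pos hi] at h
    exact h
  · intro n
    constructor
    · apply summable_of_ne_finset_zero (s := {((c n : K₁) : K)})
      intro k hk
      simp only [Finset.mem_singleton] at hk
      show ‖if ((c n : K₁) : K) = k then (1:ℂ) else 0‖ ^ 2 = 0
      rw [if_neg (fun h => hk h.symm)]
      simp
    · rintro ⟨f, hf⟩
      have h0 : ∀ k ∈ K₀, (inner ℂ f (e k) : ℂ) = 0 := by
        intro k hk
        have hne : ((c n : K₁) : K) ≠ k := by
          intro h
          exact Set.disjoint_left.mp hdisj hk (h ▸ (c n).2)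
        rw [hf k]
        show (if ((c n : K₁) : K) = k then (1:ℂ) else 0) = 0
        rw [if_neg hne]
      have hsub : (Submodule.span ℂ (e '' K₀) : Set H)
          ⊆ (LinearMap.ker (innerSL ℂ f : H →ₗ[ℂ] ℂ) : Set H) := by
        apply Submodule.span_le.mpr
        rintro x ⟨k, hk, rfl⟩
        simpa using h0 k hk
      have hcl : closure (Submodule.span ℂ (e '' K₀) : Set H)
          ⊆ (LinearMap.ker (innerSL ℂ f : H →ₗ[ℂ] ℂ) : Set H) := by
        apply closure_minimal hsub
        exact ContinuousLinearMap.isClosed_ker ((innerSL ℂ) f)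
      have hmem := hcl (hspan _ (c n).2)
      have : (inner ℂ f (e ((c n : K₁) : K)) : ℂ) = 0 := by simpa using hmem
      rw [hf] at this
      simp at this
end
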